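/- arXiv:2209.11992 — 2 statements merged into one kernel-verified Lean document; each statement's English description precedes it below -/
import Mathlib

section
/- Let n ≥ 1 and let N₀ = N₀(n) be the Besicovitch constant for ℝ^{n+1}. Let A ⊆ B_1(0) ⊂ ℝ^{n+1}, let s : A → (0, r) be a function with r ∈ (0, 1/2], and suppose there is an integer F ≥ 0 such that every pairwise-disjoint collection of closed balls {cl(B_{s(a)}(a)) : a ∈ A'} with A' ⊆ A satisfies |A'| ≤ F. Then for the set B_r(A) = {x : dist(x, A) < r} we have ℋ^{n+1}(B_r(A)) ≤ N₀ · F · ω_{n+1} · (2r)^{n+1}, where ω_{n+1} is the volume of the unit ball in ℝ^{n+1}. -/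
open Metric MeasureTheory
open scoped ENNReal

/-- Abstract form of the 'low stability radius' tubular neighbourhood bound: if every
pairwise-disjoint collection of closed balls `closedBall a (s a)`, `a ∈ A' ⊆ A`, has
cardinality at most `F`, and `0 < s < r` on `A ⊆ B₁(0)`, then the measure of the
`r`-neighbourhood of `A` is at most `N₀ · F · ω_{n+1} · (2r)^{n+1}`, where `N₀` is the
Besicovitch constant of `ℝ^{n+1}` and `ω_{n+1}` the volume of the unit ball. -/
theorem low_stability_tubular_bound (n : ℕ) (hn : 1 ≤ n) :
    ∃ N₀ : ℝ, 0 < N₀ ∧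
      ∀ (A : Set (EuclideanSpace ℝ (Fin (n + 1)))) (r : ℝ), 0 < r → r ≤ 1 / 2 →
        A ⊆ ball (0 : EuclideanSpace ℝ (Fin (n + 1))) 1 →
        ∀ s : EuclideanSpace ℝ (Fin (n + 1)) → ℝ, (∀ a ∈ A, 0 < s a ∧ s a < r) →
        ∀ F : ℕ,
          (∀ A' : Finset (EuclideanSpace ℝ (Fin (n + 1))), ↑A' ⊆ A →
            (A' : Set (EuclideanSpace ℝ (Fin (n + 1)))).PairwiseDisjoint
              (fun a => closedBall a (s a)) →
            A'.card ≤ F) →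
          volume (thickening r A) ≤
            ENNReal.ofReal (N₀ * (F : ℝ) * (2 * r) ^ (n + 1)) *
              volume (ball (0 : EuclideanSpace ℝ (Fin (n + 1))) 1) := by
  classical
  refine ⟨(3 / 2 : ℝ) ^ (n + 1), by positivity, ?_⟩
  intro A r hr hr2 hA s hs F hF
  -- separated finsets
  set P : ℕ → Prop := fun m => ∃ T : Finset (EuclideanSpace ℝ (Fin (n + 1))), ↑T ⊆ A ∧
    (∀ a ∈ T, ∀ b ∈ T, a ≠ b → 2 * r < dist a b) ∧ T.card = m with hP
  have hP0 : P 0 := ⟨∅, by simp, by simp, rfl⟩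
  have hPle : ∀ m, P m → m ≤ F := by
    rintro m ⟨T, hTA, hsep, rfl⟩
    refine hF T hTA ?_
    intro a ha b hb hab
    have ha' : a ∈ T := ha
    have hb' : b ∈ T := hb
    refine Metric.closedBall_disjoint_closedBall ?_
    have h1 : s a < r := (hs a (hTA ha')).2
    have h2 : s b < r := (hs b (hTA hb')).2
    have := hsep a ha' b hb' hab
    linarith
  set m := Nat.findGreatest P F with hm
  have hPm : P m := Nat.findGreatest_spec (Nat.zero_le F) hP0
  have hPsucc : ¬ P (m + 1) := by
    by_cases h : m + 1 ≤ F
    · exact Nat.findGreatest_is_greatest (Nat.lt_succ_self m) h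
    · intro hp
      exact h (hPle _ hp)
  obtain ⟨T, hTA, hsep, hcard⟩ := hPm
  -- maximality: every point of A is within 2r of T
  have hcover : ∀ a ∈ A, ∃ b ∈ T, dist a b ≤ 2 * r := by
    intro a haA
    by_contra h
    push_neg at h
    have haT : a ∉ T := fun ha => by
      have := h a ha
      have : (0:ℝ) < 2 * r := by positivity
      simp only [dist_self] at *
      linarith [h a ha]
    apply hPsucc
    refine ⟨insert a T, ?_, ?_, by rw [Finset.card_insert_of_notMem haT, hcard]⟩
    · intro x hx
      rcases Finset.mem_insert.mp hx with rfl | hx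
      · exact haA
      · exact hTA hx
    · intro x hx y hy hxy
      rcases Finset.mem_insert.mp hx with rfl | hxT
      · rcases Finset.mem_insert.mp hy with rfl | hyT
        · exact absurd rfl hxy
        · exact h y hyT
      · rcases Finset.mem_insert.mp hy with rfl | hyT
        · rw [dist_comm]; exact h x hxT
        · exact hsep x hxT y hyT hxy
  -- cover the thickening by 3r-balls
  have hsub : thickening r A ⊆ ⋃ b ∈ T, ball b (3 * r) := by
    intro x hx
    obtain ⟨a, haA, hxa⟩ := Metric.mem_thickening_iff.mp hx
    obtain ⟨b, hbT, hab⟩ := hcover a haA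
    refine Set.mem_biUnion hbT ?_
    have : dist x b ≤ dist x a + dist a b := dist_triangle x a b
    simp only [mem_ball]
    linarith
  have hballvol : ∀ b : EuclideanSpace ℝ (Fin (n + 1)),
      volume (ball b (3 * r)) = ENNReal.ofReal ((3 * r) ^ (n + 1)) *
        volume (ball (0 : EuclideanSpace ℝ (Fin (n + 1))) 1) := by
    intro b
    have h3r : (0:ℝ) ≤ 3 * r := by positivity
    rw [Measure.addHaar_ball volume b h3r]
    congr 2
    simp
  calc volume (thickening r A) ≤ volume (⋃ b ∈ T, ball b (3 * r)) :=
        measure_mono hsub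
    _ ≤ ∑ b ∈ T, volume (ball b (3 * r)) := measure_biUnion_finset_le T _
    _ = T.card • (ENNReal.ofReal ((3 * r) ^ (n + 1)) * volume (ball (0 : EuclideanSpace ℝ (Fin (n + 1))) 1)) := by
        rw [Finset.sum_congr rfl fun b _ => hballvol b, Finset.sum_const]
    _ ≤ F • (ENNReal.ofReal ((3 * r) ^ (n + 1)) * volume (ball (0 : EuclideanSpace ℝ (Fin (n + 1))) 1)) := by
        gcongr
        rw [hcard]; exact hPle m ⟨T, hTA, hsep, hcard⟩
    _ = ENNReal.ofReal ((3 / 2 : ℝ) ^ (n + 1) * (F : ℝ) * (2 * r) ^ (n + 1)) *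
          volume (ball (0 : EuclideanSpace ℝ (Fin (n + 1))) 1) := by
        rw [nsmul_eq_mul, ← mul_assoc]
        congr 1
        rw [show ((F : ℝ≥0∞)) = ENNReal.ofReal (F : ℝ) by simp,
          ← ENNReal.ofReal_mul (by positivity)]
        congr 1
        rw [mul_comm ((3/2:ℝ)^(n+1)) (F:ℝ), mul_assoc, ← mul_pow]
        ring_nf
end

section
/- Let n ≥ 1, 0 < a < b < ∞, γ ∈ (0,1), and let A ⊆ B_1(0) ⊂ ℝ^{n+1} with a function s : A → [a, b]. Suppose there is an integer F ≥ 1 such that every pairwise-disjoint collection of closed balls {cl(B_{s(x)}(x)) : x ∈ A'}, A' ⊆ A, has cardinality at most F. Then there exists a finite set B ⊆ A such that A ⊆ ⋃_{y ∈ B} B_{γ s(y)}(y) and |B| ≤ C(n) · F · (b/a)^{n+1} · (1 + γ^{-1})^{n+1}, where C(n) depends only on n. -/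
open Metric MeasureTheory Module ENNReal

lemma packing_lemma (n : ℕ) (S : Finset (EuclideanSpace ℝ (Fin (n + 1))))
    (c : EuclideanSpace ℝ (Fin (n + 1))) (R r : ℝ) (hr : 0 < r) (hR : 0 ≤ R)
    (hS : ∀ x ∈ S, dist x c ≤ R)
    (hsep : (S : Set (EuclideanSpace ℝ (Fin (n + 1)))).Pairwise
      (fun x y => r ≤ dist x y)) :
    (S.card : ℝ) ≤ ((R + r / 2) / (r / 2)) ^ (n + 1) := by
  have hd : finrank ℝ (EuclideanSpace ℝ (Fin (n + 1))) = n + 1 :=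
    finrank_euclideanSpace_fin
  have hr2 : (0 : ℝ) < r / 2 := by linarith
  have hdisj : (S : Set (EuclideanSpace ℝ (Fin (n + 1)))).PairwiseDisjoint
      (fun x => ball x (r / 2)) := by
    intro x hx y hy hxy
    exact ball_disjoint_ball (by linarith [hsep hx hy hxy])
  have hsum : ∑ x ∈ S, volume (ball x (r / 2)) ≤ volume (ball c (R + r / 2)) := by
    rw [← measure_biUnion_finset hdisj (fun x _ => measurableSet_ball)]
    apply measure_mono
    intro z hz
    simp only [Set.mem_iUnion, mem_ball] at hz ⊢
    obtain ⟨x, hx, hz⟩ := hz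
    calc dist z c ≤ dist z x + dist x c := dist_triangle z x c
    _ < r / 2 + R := by have := hS x hx; linarith
    _ = R + r / 2 := by ring
  have hball : ∀ x : EuclideanSpace ℝ (Fin (n + 1)),
      volume (ball x (r / 2)) =
        ENNReal.ofReal ((r / 2) ^ (n + 1)) *
          volume (ball (0 : EuclideanSpace ℝ (Fin (n + 1))) 1) := by
    intro x
    rw [Measure.addHaar_ball volume x hr2.le, hd]
  have hbig : volume (ball c (R + r / 2)) =
      ENNReal.ofReal ((R + r / 2) ^ (n + 1)) *
        volume (ball (0 : EuclideanSpace ℝ (Fin (n + 1))) 1) := by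
    rw [Measure.addHaar_ball volume c (by linarith), hd]
  rw [hbig] at hsum
  simp only [hball, Finset.sum_const, nsmul_eq_mul] at hsum
  have hV0 : volume (ball (0 : EuclideanSpace ℝ (Fin (n + 1))) 1) ≠ 0 :=
    (measure_ball_pos _ _ one_pos).ne'
  have hVtop : volume (ball (0 : EuclideanSpace ℝ (Fin (n + 1))) 1) ≠ ⊤ :=
    measure_ball_lt_top.ne
  rw [← mul_assoc] at hsum
  have hkey : (S.card : ℝ≥0∞) * ENNReal.ofReal ((r / 2) ^ (n + 1)) ≤
      ENNReal.ofReal ((R + r / 2) ^ (n + 1)) :=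
    (ENNReal.mul_le_mul_iff_left hV0 hVtop).mp hsum
  have hreal : (S.card : ℝ) * (r / 2) ^ (n + 1) ≤ (R + r / 2) ^ (n + 1) := by
    have h1 : ENNReal.ofReal ((S.card : ℝ) * (r / 2) ^ (n + 1)) ≤
        ENNReal.ofReal ((R + r / 2) ^ (n + 1)) := by
      rw [ENNReal.ofReal_mul (by positivity), ENNReal.ofReal_natCast]
      exact hkey
    exact (ENNReal.ofReal_le_ofReal_iff (by positivity)).mp h1
  rw [div_pow, le_div_iff₀ (by positivity)]
  linarith

/-- Key covering lemma: if `s : A → [a,b]` and every pairwise-disjoint collection of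
closed balls `closedBall x (s x)` with centres in `A` has cardinality at most `F`, then
there is a finite set `B ⊆ A` with `A ⊆ ⋃_{y ∈ B} ball y (γ s y)` and
`|B| ≤ C(n) · F · (b/a)^{n+1} · (1 + γ⁻¹)^{n+1}`. -/
theorem covering_lemma (n : ℕ) (hn : 1 ≤ n) :
    ∃ C : ℝ, 0 < C ∧
      ∀ a b γ : ℝ, 0 < a → a < b → γ ∈ Set.Ioo (0 : ℝ) 1 →
      ∀ A : Set (EuclideanSpace ℝ (Fin (n + 1))),
        A ⊆ ball (0 : EuclideanSpace ℝ (Fin (n + 1))) 1 →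
      ∀ s : EuclideanSpace ℝ (Fin (n + 1)) → ℝ, (∀ x ∈ A, s x ∈ Set.Icc a b) →
      ∀ F : ℕ, 1 ≤ F →
        (∀ A' : Finset (EuclideanSpace ℝ (Fin (n + 1))), ↑A' ⊆ A →
          (A' : Set (EuclideanSpace ℝ (Fin (n + 1)))).PairwiseDisjoint
            (fun x => closedBall x (s x)) →
          A'.card ≤ F) →
        ∃ B : Finset (EuclideanSpace ℝ (Fin (n + 1))), ↑B ⊆ A ∧
          (A ⊆ ⋃ y ∈ B, ball y (γ * s y)) ∧
          (B.card : ℝ) ≤ C * (F : ℝ) * (b / a) ^ (n + 1) * (1 + γ⁻¹) ^ (n + 1) := by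
  classical
  refine ⟨4 ^ (n + 1), by positivity, ?_⟩
  intro a b γ ha hab hγ A hA s hs F hF hdisjF
  obtain ⟨hγ0, hγ1⟩ := hγ
  have hb : 0 < b := ha.trans hab
  set r := γ * a with hr_def
  have hr : 0 < r := by positivity
  -- Zorn's lemma: a maximal r-separated subset T of A
  obtain ⟨T, hTmax⟩ := zorn_subset
      {T : Set (EuclideanSpace ℝ (Fin (n + 1))) |
        T ⊆ A ∧ T.Pairwise fun x y => r ≤ dist x y} (by
    intro c hc hchain
    refine ⟨⋃₀ c, ⟨Set.sUnion_subset fun t ht => (hc ht).1, ?_⟩,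
      fun t ht => Set.subset_sUnion_of_mem ht⟩
    intro x hx y hy hxy
    obtain ⟨t1, ht1, hx1⟩ := hx
    obtain ⟨t2, ht2, hy2⟩ := hy
    rcases hchain.total ht1 ht2 with h | h
    · exact (hc ht2).2 (h hx1) hy2 hxy
    · exact (hc ht1).2 hx1 (h hy2) hxy)
  have hTA : T ⊆ A := hTmax.prop.1
  have hTsep : T.Pairwise fun x y => r ≤ dist x y := hTmax.prop.2
  -- T is finite
  have hTfin : T.Finite := by
    by_contra hinf
    have hinf' : T.Infinite := hinf
    set M := ((1 + r / 2) / (r / 2)) ^ (n + 1) with hM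
    obtain ⟨t, htT, htcard⟩ := hinf'.exists_subset_card_eq (⌈M⌉₊ + 1)
    have h1 : (t.card : ℝ) ≤ M := by
      apply packing_lemma n t 0 1 r hr zero_le_one
      · intro x hx
        have := mem_ball.mp (hA (hTA (htT hx)))
        simpa using this.le
      · exact hTsep.mono htT
    rw [htcard] at h1
    have h2 : M ≤ (⌈M⌉₊ : ℝ) := Nat.le_ceil M
    push_cast at h1
    linarith
  set Tf := hTfin.toFinset with hTf
  have hTfT : ∀ x ∈ Tf, x ∈ T := fun x hx => hTfin.mem_toFinset.mp hx
  have hTfA : ∀ x ∈ Tf, x ∈ A := fun x hx => hTA (hTfT x hx)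
  -- a maximal-cardinality disjoint subfamily D of Tf
  set P : Finset (EuclideanSpace ℝ (Fin (n + 1))) → Prop :=
    fun D => (↑D : Set (EuclideanSpace ℝ (Fin (n + 1)))).PairwiseDisjoint
      fun x => closedBall x (s x) with hP
  have hcand : (Tf.powerset.filter P).Nonempty :=
    ⟨∅, by simp [P, Set.pairwiseDisjoint_empty]⟩
  obtain ⟨D, hDmem, hDmax⟩ := Finset.exists_max_image _ Finset.card hcand
  rw [Finset.mem_filter, Finset.mem_powerset] at hDmem
  obtain ⟨hDT, hDP⟩ := hDmem
  have hDF : D.card ≤ F :=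
    hdisjF D (fun x hx => hTfA x (hDT hx)) hDP
  -- every point of Tf is within 2b of some point of D
  have hnear : ∀ x ∈ Tf, ∃ d ∈ D, dist x d ≤ 2 * b := by
    intro x hx
    by_cases hxD : x ∈ D
    · exact ⟨x, hxD, by simp; linarith⟩
    · have hPx : ¬ P (insert x D) := by
        intro hPi
        have hsub : insert x D ∈ Tf.powerset.filter P := by
          rw [Finset.mem_filter, Finset.mem_powerset]
          exact ⟨Finset.insert_subset hx hDT, hPi⟩
        have := hDmax _ hsub
        rw [Finset.card_insert_of_notMem hxD] at this
        omega
      simp only [P, Finset.coe_insert, Set.pairwiseDisjoint_insert] at hPx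
      push_neg at hPx
      obtain ⟨d, hd, hne, hnd⟩ := hPx hDP
      obtain ⟨z, hz1, hz2⟩ := Set.not_disjoint_iff.mp hnd
      refine ⟨d, hd, ?_⟩
      have h1 := mem_closedBall.mp hz1
      have h2 := mem_closedBall.mp hz2
      have hsx := hs x (hTfA x hx)
      have hsd := hs d (hTfA d (hDT hd))
      calc dist x d ≤ dist x z + dist z d := dist_triangle _ _ _
      _ = dist z x + dist z d := by rw [dist_comm x z]
      _ ≤ s x + s d := add_le_add h1 h2
      _ ≤ 2 * b := by have := hsx.2; have := hsd.2; linarith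
  -- counting
  have hcount : (Tf.card : ℝ) ≤
      (D.card : ℝ) * ((2 * b + r / 2) / (r / 2)) ^ (n + 1) := by
    have hsubT : Tf ⊆ D.biUnion fun d => Tf.filter fun x => dist x d ≤ 2 * b := by
      intro x hx
      obtain ⟨d, hd, hxd⟩ := hnear x hx
      exact Finset.mem_biUnion.mpr ⟨d, hd, Finset.mem_filter.mpr ⟨hx, hxd⟩⟩
    have h1 : Tf.card ≤ ∑ d ∈ D, (Tf.filter fun x => dist x d ≤ 2 * b).card :=
      (Finset.card_le_card hsubT).trans Finset.card_biUnion_le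
    have h2 : ∀ d ∈ D, ((Tf.filter fun x => dist x d ≤ 2 * b).card : ℝ) ≤
        ((2 * b + r / 2) / (r / 2)) ^ (n + 1) := by
      intro d _
      apply packing_lemma n _ d (2 * b) r hr (by linarith)
      · intro x hx
        exact (Finset.mem_filter.mp hx).2
      · apply hTsep.mono
        intro x hx
        rw [Finset.coe_filter] at hx
        exact hTfT x hx.1
    calc (Tf.card : ℝ)
        ≤ ∑ d ∈ D, ((Tf.filter fun x => dist x d ≤ 2 * b).card : ℝ) := by
          exact_mod_cast h1
      _ ≤ ∑ _d ∈ D, ((2 * b + r / 2) / (r / 2)) ^ (n + 1) :=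
          Finset.sum_le_sum h2
      _ = (D.card : ℝ) * ((2 * b + r / 2) / (r / 2)) ^ (n + 1) := by
          rw [Finset.sum_const, nsmul_eq_mul]
  refine ⟨Tf, fun x hx => hTfA x hx, ?_, ?_⟩
  · -- covering property
    intro x hx
    have hex : ∃ y ∈ T, dist x y < r := by
      by_contra h
      push_neg at h
      have hxT : x ∉ T := by
        intro hxT
        have := h x hxT
        simp [dist_self] at this
        linarith
      have hmem : insert x T ∈
          {T : Set (EuclideanSpace ℝ (Fin (n + 1))) |
            T ⊆ A ∧ T.Pairwise fun x y => r ≤ dist x y} := by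
        constructor
        · exact Set.insert_subset hx hTA
        · rw [Set.pairwise_insert]
          exact ⟨hTsep, fun y hy _ => ⟨h y hy, by rw [dist_comm]; exact h y hy⟩⟩
      have := hTmax.2 hmem (Set.subset_insert x T)
      exact hxT (this (Set.mem_insert x T))
    obtain ⟨y, hy, hxy⟩ := hex
    have hsy := (hs y (hTA hy)).1
    refine Set.mem_iUnion₂.mpr ⟨y, hTfin.mem_toFinset.mpr hy, ?_⟩
    rw [mem_ball]
    calc dist x y < γ * a := hxy
    _ ≤ γ * s y := by nlinarith
  · -- cardinality bound
    have hba : 1 ≤ b / a := by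
      rw [le_div_iff₀ ha]; linarith
    have key : (2 * b + r / 2) / (r / 2) ≤ 4 * (b / a * (1 + γ⁻¹)) := by
      have h1 : (2 * b + r / 2) / (r / 2) = 1 + 4 * (b / a) * γ⁻¹ := by
        rw [hr_def]
        field_simp
        ring
      have h2 : 4 * (b / a * (1 + γ⁻¹)) = 4 * (b / a) + 4 * (b / a) * γ⁻¹ := by
        ring
      rw [h1, h2]
      linarith
    calc (Tf.card : ℝ)
        ≤ (D.card : ℝ) * ((2 * b + r / 2) / (r / 2)) ^ (n + 1) := hcount
      _ ≤ (F : ℝ) * (4 * (b / a * (1 + γ⁻¹))) ^ (n + 1) := by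
          apply mul_le_mul (by exact_mod_cast hDF)
            (pow_le_pow_left₀ (by positivity) key _) (by positivity)
            (Nat.cast_nonneg F)
      _ = 4 ^ (n + 1) * (F : ℝ) * (b / a) ^ (n + 1) * (1 + γ⁻¹) ^ (n + 1) := by
          rw [mul_pow, mul_pow]
          ring
end
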